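/- For every K > 1 there exist M > 2K + 3 and θ₀ > 0 such that for every θ ∈ (0,θ₀) and every δ̂ ∈ (0,1], the solution (x̂₁, x̂₂, x̂₃) of the three-particle hat system (with initial data x̂₁(0) = p₁ − θ, x̂₂(0) = p₂ + Kθ, x̂₃(0) = p₃ − θ, where p₂ − p₁ = θ and p₃ − p₂ ≥ Mθ) satisfies, with θ̂_i := x̂_{i+1} − x̂_i (i = 1,2): θ̂₁(t) ≤ θ̂₂(t) for every t > 0 in the maximal interval of existence, and θ̂₁ is nonincreasing on that interval. -/

import Mathlib

open Real Filter Set MeasureTheory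

noncomputable section

/-- The fractional Laplacian of order `2s` (principal-value form). -/
def fracLap (s : ℝ) (φ : ℝ → ℝ) (x : ℝ) : ℝ :=
  (1/2) * ∫ y : ℝ, (φ (x + y) + φ (x - y) - 2 * φ x) / |y| ^ (1 + 2*s)

/-- Assumptions on the periodic potential `W`. -/
structure IsPotential (W : ℝ → ℝ) : Prop where
  contDiff : ContDiff ℝ 3 W
  holder3 : ∃ C r : NNReal, 0 < (r : ℝ) ∧ (r : ℝ) < 1 ∧ HolderWith C r (iteratedDeriv 3 W)
  periodic : ∀ v : ℝ, W (v + 1) = W v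
  zero_int : ∀ n : ℤ, W (n : ℝ) = 0
  pos_nonint : ∀ v : ℝ, (∀ n : ℤ, v ≠ (n : ℝ)) → 0 < W v
  second_deriv_pos : 0 < deriv (deriv W) 0

/-- The basic layer solution `u`. -/
structure IsLayer (s : ℝ) (W u : ℝ → ℝ) : Prop where
  diff : Differentiable ℝ u
  eqn : ∀ x, fracLap s u x = deriv W (u x)
  deriv_pos : ∀ x, 0 < deriv u x
  lim_bot : Tendsto u atBot (nhds 0)
  lim_top : Tendsto u atTop (nhds 1)
  half : u 0 = 1/2

/-- Assumptions on the external stress `σ`. -/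
structure SigmaOK (s : ℝ) (σ : ℝ → ℝ → ℝ) : Prop where
  bounded : ∃ B : ℝ, ∀ t x : ℝ, 0 ≤ t → |σ t x| ≤ B
  ucont : UniformContinuousOn (fun p : ℝ × ℝ => σ p.1 p.2) (Ici 0 ×ˢ univ)
  deriv_bound : ∃ M : ℝ, 0 < M ∧ ∃ α : ℝ, s < α ∧ α < 1 ∧
    (∀ t x : ℝ, 0 ≤ t →
      |deriv (fun ξ => σ t ξ) x| + |deriv (fun τ => σ τ x) t| ≤ M) ∧
    (∀ t x h : ℝ, 0 ≤ t →
      |deriv (fun ξ => σ t ξ) (x + h) - deriv (fun ξ => σ t ξ) x| ≤ M * |h| ^ α)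

/-- `v` is a bounded pointwise solution of `ε ∂_t v = I_s v − ε^{−2s} W'(v) + σ`
with initial datum `v0`. -/
def SolvesPDE (s ε : ℝ) (W : ℝ → ℝ) (σ : ℝ → ℝ → ℝ) (v0 : ℝ → ℝ) (v : ℝ → ℝ → ℝ) : Prop :=
  (∃ B : ℝ, ∀ t x : ℝ, |v t x| ≤ B) ∧
  (∀ x : ℝ, v 0 x = v0 x) ∧
  (∀ t : ℝ, 0 < t → ∀ x : ℝ,
    HasDerivAt (fun τ => v τ x)
      ((1/ε) * (fracLap s (v t) x - (1/ε ^ (2*s)) * deriv W (v t x) + σ t x)) t)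

/-- The `δ`-perturbed two-particle system with collision time `Tc`
(the case `δ = 0` is the unperturbed one). -/
def TwoPartPert (s γ δ : ℝ) (σ : ℝ → ℝ → ℝ) (x10 x20 Tc : ℝ) (x1 x2 : ℝ → ℝ) : Prop :=
  x1 0 = x10 - δ ∧ x2 0 = x20 + δ ∧
  ContinuousOn x1 (Ico 0 Tc) ∧ ContinuousOn x2 (Ico 0 Tc) ∧
  (∀ t ∈ Ioo (0:ℝ) Tc,
    HasDerivAt x1 (γ * (1/(2*s*(x2 t - x1 t) ^ (2*s)) - σ t (x1 t) - δ)) t ∧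
    HasDerivAt x2 (γ * (-(1/(2*s*(x2 t - x1 t) ^ (2*s))) + σ t (x2 t) + δ)) t) ∧
  (∀ t ∈ Ico (0:ℝ) Tc, x1 t < x2 t) ∧
  Tendsto (fun t => x2 t - x1 t) (nhdsWithin Tc (Iio Tc)) (nhds 0)

/-- Orientations of the three transition layers. -/
def zeta : Fin 3 → ℝ := ![1, -1, 1]

/-- The `δ`-perturbed three-particle system with collision time `Tc`
(the case `δ = 0` is the unperturbed one). -/
def ThreePartPert (s γ δ : ℝ) (σ : ℝ → ℝ → ℝ) (X0 : Fin 3 → ℝ) (Tc : ℝ)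
    (X : Fin 3 → ℝ → ℝ) : Prop :=
  (∀ i, X i 0 = X0 i - zeta i * δ) ∧
  (∀ i, ContinuousOn (X i) (Ico 0 Tc)) ∧
  (∀ i, ∀ t ∈ Ioo (0:ℝ) Tc,
    HasDerivAt (X i)
      (γ * ((∑ j ∈ Finset.univ.erase i,
          zeta i * zeta j * (X i t - X j t) / (2*s*|X i t - X j t| ^ (1+2*s)))
        - zeta i * σ t (X i t) - zeta i * δ)) t) ∧
  (∀ t ∈ Ico (0:ℝ) Tc, X 0 t < X 1 t ∧ X 1 t < X 2 t) ∧
  Tendsto (fun t => min (X 1 t - X 0 t) (X 2 t - X 1 t)) (nhdsWithin Tc (Iio Tc)) (nhds 0)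

/-- The corrector equation, together with the decay at infinity. -/
def CorrectorEqn (s η : ℝ) (W u ψ : ℝ → ℝ) : Prop :=
  (∀ x, fracLap s ψ x - deriv (deriv W) (u x) * ψ x
      = deriv u x + η * (deriv (deriv W) (u x) - deriv (deriv W) 0)) ∧
  Tendsto ψ atBot (nhds 0) ∧ Tendsto ψ atTop (nhds 0)

/-- The layer problem (without regularity). -/
def LayerEqn (s : ℝ) (W u : ℝ → ℝ) : Prop :=
  (∀ x, fracLap s u x = deriv W (u x)) ∧ (∀ x, 0 < deriv u x) ∧
  Tendsto u atBot (nhds 0) ∧ Tendsto u atTop (nhds 1) ∧ u 0 = 1/2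

/-- Membership in `C^{2,α}(ℝ)` for some `α ∈ (0,1)`. -/
def C2Holder (u : ℝ → ℝ) : Prop :=
  ContDiff ℝ 2 u ∧ ∃ C r : NNReal, 0 < (r : ℝ) ∧ (r : ℝ) < 1 ∧ HolderWith C r (iteratedDeriv 2 u)

def heaviside (x : ℝ) : ℝ := if 0 < x then 1 else 0

/-- The barrier `v̄_ε` for the two-particle system, where the velocities `c̄ᵢ = ẋ̄ᵢ`
are expressed through the right-hand side of the ODE system. -/
def vbar2 (s γ ε δ β : ℝ) (u ψ : ℝ → ℝ) (σ : ℝ → ℝ → ℝ) (x1 x2 : ℝ → ℝ) (t x : ℝ) : ℝ :=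
  ε ^ (2*s) * (σ t x + δ) / β + u ((x - x1 t)/ε) + u ((x2 t - x)/ε) - 1
    - ε ^ (2*s) * (γ * (1/(2*s*(x2 t - x1 t) ^ (2*s)) - σ t (x1 t) - δ)) * ψ ((x - x1 t)/ε)
    + ε ^ (2*s) * (γ * (-(1/(2*s*(x2 t - x1 t) ^ (2*s))) + σ t (x2 t) + δ)) * ψ ((x2 t - x)/ε)

/-- The barrier `v̄_ε` for the three-particle system, where the velocities `c̄ᵢ = ẋ̄ᵢ`
are expressed through the right-hand side of the ODE system. -/
def vbar3 (s γ ε δ β : ℝ) (u ψ : ℝ → ℝ) (σ : ℝ → ℝ → ℝ) (X : Fin 3 → ℝ → ℝ) (t x : ℝ) : ℝ :=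
  ε ^ (2*s) * (σ t x + δ) / β + (∑ i, u (zeta i * (x - X i t)/ε)) - 1
    - ∑ i, zeta i * ε ^ (2*s)
        * (γ * ((∑ j ∈ Finset.univ.erase i,
            zeta i * zeta j * (X i t - X j t) / (2*s*|X i t - X j t| ^ (1+2*s)))
          - zeta i * σ t (X i t) - zeta i * δ))
        * ψ (zeta i * (x - X i t)/ε)

/-- The hat system for two particles, solved on `[0,T]` with prescribed initial data. -/
def HatSys2 (s γ δ : ℝ) (σ : ℝ → ℝ → ℝ) (a b T : ℝ) (x1 x2 : ℝ → ℝ) : Prop :=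
  x1 0 = a ∧ x2 0 = b ∧
  ContinuousOn x1 (Icc 0 T) ∧ ContinuousOn x2 (Icc 0 T) ∧
  (∀ t ∈ Ioo (0:ℝ) T,
    HasDerivAt x1 (γ * (1/(2*s*(x2 t - x1 t) ^ (2*s)) - σ t (x1 t) - δ)) t ∧
    HasDerivAt x2 (γ * (-(1/(2*s*(x2 t - x1 t) ^ (2*s))) + σ t (x2 t) + δ)) t) ∧
  (∀ t ∈ Icc (0:ℝ) T, x1 t < x2 t)

/-- The hat system for three particles, solved on `[0,T]` with prescribed initial data. -/
def HatSys3 (s γ δ : ℝ) (σ : ℝ → ℝ → ℝ) (a : Fin 3 → ℝ) (T : ℝ) (X : Fin 3 → ℝ → ℝ) : Prop :=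
  (∀ i, X i 0 = a i) ∧
  (∀ i, ContinuousOn (X i) (Icc 0 T)) ∧
  (∀ i, ∀ t ∈ Ioo (0:ℝ) T,
    HasDerivAt (X i)
      (γ * ((∑ j ∈ Finset.univ.erase i,
          zeta i * zeta j * (X i t - X j t) / (2*s*|X i t - X j t| ^ (1+2*s)))
        - zeta i * σ t (X i t) - zeta i * δ)) t) ∧
  (∀ t ∈ Icc (0:ℝ) T, X 0 t < X 1 t ∧ X 1 t < X 2 t)

/-- The supersolution barrier used after collision in the three-particle case. -/
def hsup (s ε μ K ρ y : ℝ) (u : ℝ → ℝ) (t x : ℝ) : ℝ :=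
  u ((x - (y + K * ρ * (Real.exp (-μ * t / ε ^ (2*s+1)) - 1)))/ε)
    + ρ * Real.exp (-μ * t / ε ^ (2*s+1))

end

lemma key_pos (s : ℝ) (hs : 0 < s) (x y : ℝ) (h : x < y) :
    (y - x)/(2*s*|y - x| ^ (1+2*s)) = 1/(2*s*(y-x) ^ (2*s)) := by
  have hyx : 0 < y - x := sub_pos.2 h
  rw [abs_of_pos hyx, Real.rpow_add hyx, Real.rpow_one]
  have h1 : (y - x) ≠ 0 := hyx.ne'
  have h2 : (y - x) ^ (2*s) ≠ 0 := (Real.rpow_pos_of_pos hyx _).ne'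
  field_simp

lemma key_neg (s : ℝ) (hs : 0 < s) (x y : ℝ) (h : x < y) :
    (x - y)/(2*s*|x - y| ^ (1+2*s)) = -(1/(2*s*(y-x) ^ (2*s))) := by
  have : |x - y| = |y - x| := abs_sub_comm x y
  rw [this, show x - y = -(y-x) by ring, neg_div, key_pos s hs x y h]

set_option maxHeartbeats 1000000 in
theorem statement_17
    (s γ : ℝ) (hs : s ∈ Ioo (0:ℝ) 1) (hγ : 0 < γ)
    (σ : ℝ → ℝ → ℝ) (hσ : SigmaOK s σ) :
    ∀ K : ℝ, 1 < K → ∃ M : ℝ, 2*K + 3 < M ∧ ∃ θ₀ > (0:ℝ),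
      ∀ θ ∈ Ioo (0:ℝ) θ₀, ∀ δh ∈ Ioc (0:ℝ) 1, ∀ p₁ p₂ p₃ : ℝ,
        p₂ - p₁ = θ → M*θ ≤ p₃ - p₂ →
        ∀ T : ℝ, 0 < T → ∀ X : Fin 3 → ℝ → ℝ,
          HatSys3 s γ δh σ ![p₁ - θ, p₂ + K*θ, p₃ - θ] T X →
          (∀ t ∈ Icc (0:ℝ) T, X 1 t - X 0 t ≤ X 2 t - X 1 t) ∧
          (∀ t ∈ Icc (0:ℝ) T, ∀ t' ∈ Icc (0:ℝ) T, t ≤ t' →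
            X 1 t' - X 0 t' ≤ X 1 t - X 0 t) := by
  obtain ⟨hs0, hs1⟩ := hs
  have h2s : (0:ℝ) < 2*s := by linarith
  obtain ⟨B₀, hB₀⟩ := hσ.bounded
  set B : ℝ := max B₀ 0 with hBdef
  have hB : ∀ t x : ℝ, 0 ≤ t → |σ t x| ≤ B := fun t x ht => (hB₀ t x ht).trans (le_max_left _ _)
  have hBnn : (0:ℝ) ≤ B := le_max_right _ _
  set q : ℝ := (2:ℝ) ^ (-(2*s)) with hqdef
  have hq0 : 0 < q := Real.rpow_pos_of_pos (by norm_num) _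
  have hq1 : q < 1 := Real.rpow_lt_one_of_one_lt_of_neg (by norm_num) (by linarith)
  set E : ℝ := 2*B + 2 with hEdef
  have hE : (0:ℝ) < E := by rw [hEdef]; linarith
  set D : ℝ := ((1-q) / (2*s*(2*E))) ^ (1/(2*s)) with hDdef
  have hbase : (0:ℝ) < (1-q) / (2*s*(2*E)) := div_pos (by linarith) (by positivity)
  have hDpos : 0 < D := Real.rpow_pos_of_pos hbase _
  have hDkey : 2*s*D ^ (2*s) = (1-q)/(2*E) := by
    have h1 : D ^ (2*s) = (1-q)/(2*s*(2*E)) := by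
      rw [hDdef, ← Real.rpow_mul hbase.le, one_div, inv_mul_cancel₀ h2s.ne', Real.rpow_one]
    rw [h1]
    field_simp
  intro K hK
  have hK2 : (0:ℝ) < K + 2 := by linarith
  refine ⟨4*K+8, by linarith, D/(K+2), by positivity, ?_⟩
  intro θ hθ δh hδ p₁ p₂ p₃ hp21 hp32 T hT X hX
  obtain ⟨hθ0, hθ1⟩ := hθ
  have hθD : (K+2)*θ < D := by
    have := (lt_div_iff₀ hK2).1 hθ1
    linarith
  obtain ⟨hX0, hXc, hXd, hXord⟩ := hX
  have hX00 : X 0 0 = p₁ - θ := by simpa using hX0 0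
  have hX10 : X 1 0 = p₂ + K*θ := by simpa using hX0 1
  have hX20 : X 2 0 = p₃ - θ := by simpa using hX0 2
  have hd10 : X 1 0 - X 0 0 = (K+2)*θ := by rw [hX10, hX00]; linarith
  have hd20 : (3*K+7)*θ ≤ X 2 0 - X 1 0 := by rw [hX20, hX10]; linarith
  have hpos : ∀ t ∈ Icc (0:ℝ) T, 0 < X 1 t - X 0 t ∧ 0 < X 2 t - X 1 t :=
    fun t ht => ⟨sub_pos.2 (hXord t ht).1, sub_pos.2 (hXord t ht).2⟩
  -- derivative of the first gap
  have hder1 : ∀ t ∈ Ioo (0:ℝ) T, HasDerivAt (fun τ => X 1 τ - X 0 τ)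
      (γ * (-(2*(1/(2*s*(X 1 t - X 0 t) ^ (2*s)))) + 1/(2*s*(X 2 t - X 1 t) ^ (2*s))
        + 1/(2*s*(X 2 t - X 0 t) ^ (2*s)) + σ t (X 1 t) + σ t (X 0 t) + 2*δh)) t := by
    intro t ht
    obtain ⟨h01, h12⟩ := hXord t ⟨ht.1.le, ht.2.le⟩
    have h02 : X 0 t < X 2 t := h01.trans h12
    have H0 := hXd 0 t ht
    have H1 := hXd 1 t ht
    have hS0 : (∑ j ∈ Finset.univ.erase (0 : Fin 3),
          zeta 0 * zeta j * (X 0 t - X j t) / (2*s*|X 0 t - X j t| ^ (1+2*s)))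
        = 1/(2*s*(X 1 t - X 0 t) ^ (2*s)) - 1/(2*s*(X 2 t - X 0 t) ^ (2*s)) := by
      rw [Finset.sum_erase_eq_sub (Finset.mem_univ _), Fin.sum_univ_three]
      simp only [zeta, Matrix.cons_val_zero, Matrix.cons_val_one, Matrix.head_cons,
        Matrix.cons_val_two, Matrix.tail_cons, sub_self, mul_zero, zero_div]
      rw [mul_div_assoc, mul_div_assoc, key_neg s hs0 _ _ h01, key_neg s hs0 _ _ h02]
      ring
    have hS1 : (∑ j ∈ Finset.univ.erase (1 : Fin 3),
          zeta 1 * zeta j * (X 1 t - X j t) / (2*s*|X 1 t - X j t| ^ (1+2*s)))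
        = -(1/(2*s*(X 1 t - X 0 t) ^ (2*s))) + 1/(2*s*(X 2 t - X 1 t) ^ (2*s)) := by
      rw [Finset.sum_erase_eq_sub (Finset.mem_univ _), Fin.sum_univ_three]
      simp only [zeta, Matrix.cons_val_zero, Matrix.cons_val_one, Matrix.head_cons,
        Matrix.cons_val_two, Matrix.tail_cons, sub_self, mul_zero, zero_div]
      rw [mul_div_assoc, mul_div_assoc, key_pos s hs0 _ _ h01, key_neg s hs0 _ _ h12]
      ring
    rw [hS1] at H1
    rw [hS0] at H0
    have h := H1.sub H0
    refine h.congr_deriv ?_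
    simp only [zeta, Matrix.cons_val_zero, Matrix.cons_val_one, Matrix.head_cons]
    ring
  -- derivative of the difference of the gaps
  have hderg : ∀ t ∈ Ioo (0:ℝ) T, HasDerivAt (fun τ => (X 2 τ - X 1 τ) - (X 1 τ - X 0 τ))
      (γ * (3*(1/(2*s*(X 1 t - X 0 t) ^ (2*s))) - 3*(1/(2*s*(X 2 t - X 1 t) ^ (2*s)))
        - (σ t (X 2 t) + 2*σ t (X 1 t) + σ t (X 0 t)) - 4*δh)) t := by
    intro t ht
    obtain ⟨h01, h12⟩ := hXord t ⟨ht.1.le, ht.2.le⟩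
    have h02 : X 0 t < X 2 t := h01.trans h12
    have H0 := hXd 0 t ht
    have H1 := hXd 1 t ht
    have H2 := hXd 2 t ht
    have hS0 : (∑ j ∈ Finset.univ.erase (0 : Fin 3),
          zeta 0 * zeta j * (X 0 t - X j t) / (2*s*|X 0 t - X j t| ^ (1+2*s)))
        = 1/(2*s*(X 1 t - X 0 t) ^ (2*s)) - 1/(2*s*(X 2 t - X 0 t) ^ (2*s)) := by
      rw [Finset.sum_erase_eq_sub (Finset.mem_univ _), Fin.sum_univ_three]
      simp only [zeta, Matrix.cons_val_zero, Matrix.cons_val_one, Matrix.head_cons,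
        Matrix.cons_val_two, Matrix.tail_cons, sub_self, mul_zero, zero_div]
      rw [mul_div_assoc, mul_div_assoc, key_neg s hs0 _ _ h01, key_neg s hs0 _ _ h02]
      ring
    have hS1 : (∑ j ∈ Finset.univ.erase (1 : Fin 3),
          zeta 1 * zeta j * (X 1 t - X j t) / (2*s*|X 1 t - X j t| ^ (1+2*s)))
        = -(1/(2*s*(X 1 t - X 0 t) ^ (2*s))) + 1/(2*s*(X 2 t - X 1 t) ^ (2*s)) := by
      rw [Finset.sum_erase_eq_sub (Finset.mem_univ _), Fin.sum_univ_three]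
      simp only [zeta, Matrix.cons_val_zero, Matrix.cons_val_one, Matrix.head_cons,
        Matrix.cons_val_two, Matrix.tail_cons, sub_self, mul_zero, zero_div]
      rw [mul_div_assoc, mul_div_assoc, key_pos s hs0 _ _ h01, key_neg s hs0 _ _ h12]
      ring
    have hS2 : (∑ j ∈ Finset.univ.erase (2 : Fin 3),
          zeta 2 * zeta j * (X 2 t - X j t) / (2*s*|X 2 t - X j t| ^ (1+2*s)))
        = 1/(2*s*(X 2 t - X 0 t) ^ (2*s)) - 1/(2*s*(X 2 t - X 1 t) ^ (2*s)) := by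
      rw [Finset.sum_erase_eq_sub (Finset.mem_univ _), Fin.sum_univ_three]
      simp only [zeta, Matrix.cons_val_zero, Matrix.cons_val_one, Matrix.head_cons,
        Matrix.cons_val_two, Matrix.tail_cons, sub_self, mul_zero, zero_div]
      rw [mul_div_assoc, mul_div_assoc, key_pos s hs0 _ _ h02, key_pos s hs0 _ _ h12]
      ring
    rw [hS0] at H0
    rw [hS1] at H1
    rw [hS2] at H2
    have h := (H2.sub H1).sub (H1.sub H0)
    refine h.congr_deriv ?_
    simp only [zeta, Matrix.cons_val_zero, Matrix.cons_val_one, Matrix.head_cons,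
      Matrix.cons_val_two, Matrix.tail_cons]
    ring
  -- bound on the derivative of the first gap
  have hbound1 : ∀ t ∈ Ioo (0:ℝ) T, X 1 t - X 0 t ≤ D → X 1 t - X 0 t ≤ X 2 t - X 1 t →
      γ * (-(2*(1/(2*s*(X 1 t - X 0 t) ^ (2*s)))) + 1/(2*s*(X 2 t - X 1 t) ^ (2*s))
        + 1/(2*s*(X 2 t - X 0 t) ^ (2*s)) + σ t (X 1 t) + σ t (X 0 t) + 2*δh) ≤ -(γ*E) := by
    intro t ht hD1 h12le
    obtain ⟨hp1, hp2⟩ := hpos t ⟨ht.1.le, ht.2.le⟩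
    have hr1 : (0:ℝ) < (X 1 t - X 0 t) ^ (2*s) := Real.rpow_pos_of_pos hp1 _
    have hA21 : 1/(2*s*(X 2 t - X 1 t) ^ (2*s)) ≤ 1/(2*s*(X 1 t - X 0 t) ^ (2*s)) :=
      one_div_le_one_div_of_le (by positivity)
        (mul_le_mul_of_nonneg_left (Real.rpow_le_rpow hp1.le h12le h2s.le) h2s.le)
    have hmul : ((2:ℝ)*(X 1 t - X 0 t)) ^ (2*s) = (2:ℝ) ^ (2*s) * (X 1 t - X 0 t) ^ (2*s) :=
      Real.mul_rpow (by norm_num) hp1.le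
    have hA31 : 1/(2*s*(X 2 t - X 0 t) ^ (2*s)) ≤ q * (1/(2*s*(X 1 t - X 0 t) ^ (2*s))) := by
      have hle : (2:ℝ) ^ (2*s) * (X 1 t - X 0 t) ^ (2*s) ≤ (X 2 t - X 0 t) ^ (2*s) := by
        rw [← hmul]
        exact Real.rpow_le_rpow (by positivity) (by linarith) h2s.le
      have h1 : 1/(2*s*(X 2 t - X 0 t) ^ (2*s))
          ≤ 1/(2*s*((2:ℝ) ^ (2*s) * (X 1 t - X 0 t) ^ (2*s))) :=
        one_div_le_one_div_of_le (by positivity) (mul_le_mul_of_nonneg_left hle h2s.le)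
      refine h1.trans (le_of_eq ?_)
      rw [hqdef, Real.rpow_neg (by norm_num : (0:ℝ) ≤ 2)]
      have h2pow : (0:ℝ) < (2:ℝ) ^ (2*s) := Real.rpow_pos_of_pos (by norm_num) _
      field_simp
    have hA1D : 2*E ≤ (1-q) * (1/(2*s*(X 1 t - X 0 t) ^ (2*s))) := by
      have hDr : 2*s*(X 1 t - X 0 t) ^ (2*s) ≤ 2*s*D ^ (2*s) :=
        mul_le_mul_of_nonneg_left (Real.rpow_le_rpow hp1.le hD1 h2s.le) h2s.le
      have h1 : 1/(2*s*D ^ (2*s)) ≤ 1/(2*s*(X 1 t - X 0 t) ^ (2*s)) :=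
        one_div_le_one_div_of_le (by positivity) hDr
      rw [hDkey, one_div_div] at h1
      have hq1' : (0:ℝ) < 1 - q := by linarith
      have h2 := mul_le_mul_of_nonneg_left h1 hq1'.le
      have h3 : (1-q) * (2*E/(1-q)) = 2*E := by field_simp
      linarith
    have hσ1 : σ t (X 1 t) ≤ B := (abs_le.1 (hB t _ ht.1.le)).2
    have hσ0 : σ t (X 0 t) ≤ B := (abs_le.1 (hB t _ ht.1.le)).2
    have hinner : -(2*(1/(2*s*(X 1 t - X 0 t) ^ (2*s)))) + 1/(2*s*(X 2 t - X 1 t) ^ (2*s))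
        + 1/(2*s*(X 2 t - X 0 t) ^ (2*s)) + σ t (X 1 t) + σ t (X 0 t) + 2*δh ≤ -E := by
      have hδ1 : δh ≤ 1 := hδ.2
      rw [hEdef] at hA1D ⊢
      nlinarith [hA21, hA31, hA1D]
    calc γ * _ ≤ γ * (-E) := mul_le_mul_of_nonneg_left hinner hγ.le
      _ = -(γ*E) := by ring
  -- bound on the derivative of the gap difference
  have hboundg : ∀ t ∈ Ioo (0:ℝ) T, X 1 t - X 0 t ≤ X 2 t - X 1 t →
      -(γ*(2*E)) ≤ γ * (3*(1/(2*s*(X 1 t - X 0 t) ^ (2*s))) - 3*(1/(2*s*(X 2 t - X 1 t) ^ (2*s)))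
        - (σ t (X 2 t) + 2*σ t (X 1 t) + σ t (X 0 t)) - 4*δh) := by
    intro t ht h12le
    obtain ⟨hp1, hp2⟩ := hpos t ⟨ht.1.le, ht.2.le⟩
    have hA21 : 1/(2*s*(X 2 t - X 1 t) ^ (2*s)) ≤ 1/(2*s*(X 1 t - X 0 t) ^ (2*s)) :=
      one_div_le_one_div_of_le (by positivity)
        (mul_le_mul_of_nonneg_left (Real.rpow_le_rpow hp1.le h12le h2s.le) h2s.le)
    have hσ2 : σ t (X 2 t) ≤ B := (abs_le.1 (hB t _ ht.1.le)).2
    have hσ1 : σ t (X 1 t) ≤ B := (abs_le.1 (hB t _ ht.1.le)).2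
    have hσ0 : σ t (X 0 t) ≤ B := (abs_le.1 (hB t _ ht.1.le)).2
    have hδ1 : δh ≤ 1 := hδ.2
    have hinner : -(2*E) ≤ 3*(1/(2*s*(X 1 t - X 0 t) ^ (2*s)))
        - 3*(1/(2*s*(X 2 t - X 1 t) ^ (2*s)))
        - (σ t (X 2 t) + 2*σ t (X 1 t) + σ t (X 0 t)) - 4*δh := by
      rw [hEdef]; linarith
    calc -(γ*(2*E)) = γ * (-(2*E)) := by ring
      _ ≤ _ := mul_le_mul_of_nonneg_left hinner hγ.le
  -- the master monotonicity lemma on any good interval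
  have master : ∀ b, b ∈ Icc (0:ℝ) T →
      (∀ τ ∈ Icc (0:ℝ) b, X 1 τ - X 0 τ ≤ D ∧ X 1 τ - X 0 τ ≤ X 2 τ - X 1 τ) →
      (AntitoneOn (fun t => X 1 t - X 0 t + γ*E*t) (Icc 0 b)) ∧
      (∀ t ∈ Icc (0:ℝ) b, θ ≤ (X 2 t - X 1 t) - (X 1 t - X 0 t)) := by
    intro b hb hgd
    have hsub : Icc (0:ℝ) b ⊆ Icc 0 T := Icc_subset_Icc le_rfl hb.2
    have hIoosub : Ioo (0:ℝ) b ⊆ Ioo 0 T := Ioo_subset_Ioo le_rfl hb.2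
    have hant : AntitoneOn (fun t => X 1 t - X 0 t + γ*E*t) (Icc 0 b) := by
      apply antitoneOn_of_deriv_nonpos (convex_Icc 0 b)
      · exact (((hXc 1).sub (hXc 0)).mono hsub).add (continuous_const.mul continuous_id).continuousOn
      · intro t ht
        rw [interior_Icc] at ht
        have hlin : HasDerivAt (fun τ : ℝ => γ*E*τ) (γ*E) t := by
          simpa using (hasDerivAt_id t).const_mul (γ*E)
        have hd : HasDerivAt (fun t => X 1 t - X 0 t + γ*E*t)
            (γ * (-(2*(1/(2*s*(X 1 t - X 0 t) ^ (2*s)))) + 1/(2*s*(X 2 t - X 1 t) ^ (2*s))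
              + 1/(2*s*(X 2 t - X 0 t) ^ (2*s)) + σ t (X 1 t) + σ t (X 0 t) + 2*δh) + γ*E) t :=
          (hder1 t (hIoosub ht)).add hlin
        exact hd.differentiableAt.differentiableWithinAt
      · intro t ht
        rw [interior_Icc] at ht
        have hlin : HasDerivAt (fun τ : ℝ => γ*E*τ) (γ*E) t := by
          simpa using (hasDerivAt_id t).const_mul (γ*E)
        have hd : HasDerivAt (fun t => X 1 t - X 0 t + γ*E*t)
            (γ * (-(2*(1/(2*s*(X 1 t - X 0 t) ^ (2*s)))) + 1/(2*s*(X 2 t - X 1 t) ^ (2*s))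
              + 1/(2*s*(X 2 t - X 0 t) ^ (2*s)) + σ t (X 1 t) + σ t (X 0 t) + 2*δh) + γ*E) t :=
          (hder1 t (hIoosub ht)).add hlin
        rw [hd.deriv]
        have hgdt := hgd t ⟨ht.1.le, ht.2.le⟩
        have := hbound1 t (hIoosub ht) hgdt.1 hgdt.2
        linarith
    refine ⟨hant, ?_⟩
    have hmono : MonotoneOn (fun t => (X 2 t - X 1 t) - (X 1 t - X 0 t) + γ*(2*E)*t) (Icc 0 b) := by
      apply monotoneOn_of_deriv_nonneg (convex_Icc 0 b)
      · exact ((((hXc 2).sub (hXc 1)).sub ((hXc 1).sub (hXc 0))).mono hsub).add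
          (continuous_const.mul continuous_id).continuousOn
      · intro t ht
        rw [interior_Icc] at ht
        have hlin : HasDerivAt (fun τ : ℝ => γ*(2*E)*τ) (γ*(2*E)) t := by
          simpa using (hasDerivAt_id t).const_mul (γ*(2*E))
        have hd : HasDerivAt (fun t => (X 2 t - X 1 t) - (X 1 t - X 0 t) + γ*(2*E)*t)
            (γ * (3*(1/(2*s*(X 1 t - X 0 t) ^ (2*s))) - 3*(1/(2*s*(X 2 t - X 1 t) ^ (2*s)))
              - (σ t (X 2 t) + 2*σ t (X 1 t) + σ t (X 0 t)) - 4*δh) + γ*(2*E)) t :=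
          (hderg t (hIoosub ht)).add hlin
        exact hd.differentiableAt.differentiableWithinAt
      · intro t ht
        rw [interior_Icc] at ht
        have hlin : HasDerivAt (fun τ : ℝ => γ*(2*E)*τ) (γ*(2*E)) t := by
          simpa using (hasDerivAt_id t).const_mul (γ*(2*E))
        have hd : HasDerivAt (fun t => (X 2 t - X 1 t) - (X 1 t - X 0 t) + γ*(2*E)*t)
            (γ * (3*(1/(2*s*(X 1 t - X 0 t) ^ (2*s))) - 3*(1/(2*s*(X 2 t - X 1 t) ^ (2*s)))
              - (σ t (X 2 t) + 2*σ t (X 1 t) + σ t (X 0 t)) - 4*δh) + γ*(2*E)) t :=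
          (hderg t (hIoosub ht)).add hlin
        rw [hd.deriv]
        have := hboundg t (hIoosub ht) (hgd t ⟨ht.1.le, ht.2.le⟩).2
        linarith
    intro t ht
    have h0mem : (0:ℝ) ∈ Icc (0:ℝ) b := ⟨le_rfl, hb.1⟩
    have h1 := hant h0mem ht ht.1
    simp only at h1
    have hpos1 : 0 < X 1 t - X 0 t := (hpos t (hsub ht)).1
    have h2 : γ*E*t < (K+2)*θ := by
      rw [hd10] at h1
      nlinarith
    have h3 := hmono h0mem ht ht.1
    simp only at h3
    rw [hd10] at h3
    nlinarith [hd20]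
  -- the continuity/invariance argument
  obtain ⟨ρ, hρdef⟩ : ∃ ρ : ℝ → ℝ, ρ = fun t => max 0 (min t T) := ⟨_, rfl⟩
  have hρc : Continuous ρ := by
    rw [hρdef]; exact continuous_const.max (continuous_id.min continuous_const)
  have hρmem : ∀ t, ρ t ∈ Icc (0:ℝ) T := by
    intro t; rw [hρdef]
    exact ⟨le_max_left _ _, max_le hT.le (min_le_right _ _)⟩
  have hρid : ∀ t ∈ Icc (0:ℝ) T, ρ t = t := by
    intro t ht; rw [hρdef]
    simp only
    rw [min_eq_left ht.2, max_eq_right ht.1]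
  obtain ⟨f, hfdef⟩ : ∃ f : ℝ → ℝ,
      f = fun t => max (X 1 (ρ t) - X 0 (ρ t) - D)
        (2 * X 1 (ρ t) - X 0 (ρ t) - X 2 (ρ t)) := ⟨_, rfl⟩
  have hYc : ∀ i, Continuous (fun t => X i (ρ t)) :=
    fun i => (hXc i).comp_continuous hρc hρmem
  have hfc : Continuous f := by
    rw [hfdef]
    exact (((hYc 1).sub (hYc 0)).sub continuous_const).max
      (((continuous_const.mul (hYc 1)).sub (hYc 0)).sub (hYc 2))
  have hfiff : ∀ t ∈ Icc (0:ℝ) T,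
      (f t ≤ 0 ↔ (X 1 t - X 0 t ≤ D ∧ X 1 t - X 0 t ≤ X 2 t - X 1 t)) := by
    intro t ht
    rw [hfdef]
    simp only [hρid t ht, max_le_iff]
    constructor
    · rintro ⟨h1, h2⟩; exact ⟨by linarith, by linarith⟩
    · rintro ⟨h1, h2⟩; exact ⟨by linarith, by linarith⟩
  have h25 : (0:ℝ) ≤ (2*K+5)*θ := mul_nonneg (by linarith) hθ0.le
  have hf0 : f 0 ≤ 0 := by
    rw [hfiff 0 ⟨le_rfl, hT.le⟩]
    constructor
    · linarith [hd10, hθD]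
    · nlinarith [hd10, hd20]
  obtain ⟨S, hSdef⟩ : ∃ S : Set ℝ,
      S = {t : ℝ | t ∈ Icc (0:ℝ) T ∧ ∀ τ ∈ Icc (0:ℝ) t, f τ ≤ 0} := ⟨_, rfl⟩
  have h0S : (0:ℝ) ∈ S := by
    rw [hSdef]
    refine ⟨⟨le_rfl, hT.le⟩, fun τ hτ => ?_⟩
    have : τ = 0 := le_antisymm hτ.2 hτ.1
    rw [this]; exact hf0
  have hSbdd : BddAbove S := by
    refine ⟨T, fun t ht => ?_⟩
    rw [hSdef] at ht; exact ht.1.2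
  have hSne : S.Nonempty := ⟨0, h0S⟩
  set t' := sSup S with ht'def
  have ht'0 : 0 ≤ t' := le_csSup hSbdd h0S
  have ht'T : t' ≤ T := csSup_le hSne fun t ht => by rw [hSdef] at ht; exact ht.1.2
  have hseg : ∀ τ, 0 ≤ τ → τ < t' → f τ ≤ 0 := by
    intro τ h0 hlt
    obtain ⟨b, hbS, hb⟩ := exists_lt_of_lt_csSup hSne hlt
    rw [hSdef] at hbS
    exact hbS.2 τ ⟨h0, hb.le⟩
  have ht'S : t' ∈ S := by
    rw [hSdef]
    refine ⟨⟨ht'0, ht'T⟩, fun τ hτ => ?_⟩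
    rcases lt_or_eq_of_le hτ.2 with h | h
    · exact hseg τ hτ.1 h
    · rcases eq_or_lt_of_le ht'0 with h0 | h0
      · rw [h, ← h0]; exact hf0
      · have htd : Tendsto f (nhdsWithin t' (Iio t')) (nhds (f t')) :=
          (hfc.continuousAt).continuousWithinAt
        rw [h]
        refine le_of_tendsto htd ?_
        filter_upwards [Ioo_mem_nhdsLT_of_mem (⟨h0, le_rfl⟩ : t' ∈ Ioc (0:ℝ) t')] with u hu
        exact hseg u hu.1.le hu.2
  have hgood' : ∀ τ ∈ Icc (0:ℝ) t', X 1 τ - X 0 τ ≤ D ∧ X 1 τ - X 0 τ ≤ X 2 τ - X 1 τ := by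
    intro τ hτ
    rw [hSdef] at ht'S
    exact (hfiff τ ⟨hτ.1, hτ.2.trans ht'T⟩).1 (ht'S.2 τ hτ)
  have ht'eq : t' = T := by
    by_contra hne
    have hlt : t' < T := lt_of_le_of_ne ht'T hne
    obtain ⟨hant, hgb⟩ := master t' ⟨ht'0, ht'T⟩ hgood'
    have h1 : X 1 t' - X 0 t' < D := by
      have h := hant ⟨le_rfl, ht'0⟩ ⟨ht'0, le_rfl⟩ ht'0
      simp only at h
      rw [hd10] at h
      have hEt : 0 ≤ γ*E*t' := mul_nonneg (mul_nonneg hγ.le hE.le) ht'0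
      linarith [hθD]
    have h2 : X 1 t' - X 0 t' < X 2 t' - X 1 t' := by
      have := hgb t' ⟨ht'0, le_rfl⟩
      linarith
    have hft' : f t' < 0 := by
      rw [hfdef]
      simp only [hρid t' ⟨ht'0, ht'T⟩]
      exact max_lt (by linarith) (by linarith)
    obtain ⟨ε, hε, hball⟩ :=
      Metric.eventually_nhds_iff.1 ((hfc.tendsto t').eventually_lt_const hft')
    have ht₁ : t' < min T (t' + ε/2) := lt_min hlt (by linarith)
    have ht₁S : min T (t' + ε/2) ∈ S := by
      rw [hSdef]
      refine ⟨⟨by linarith, min_le_left _ _⟩, fun τ hτ => ?_⟩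
      rcases le_or_gt τ t' with h | h
      · rw [hSdef] at ht'S
        exact ht'S.2 τ ⟨hτ.1, h⟩
      · refine le_of_lt (hball ?_)
        rw [Real.dist_eq, abs_of_pos (sub_pos.2 h)]
        have : τ ≤ t' + ε/2 := hτ.2.trans (min_le_right _ _)
        linarith
    have := le_csSup hSbdd ht₁S
    rw [← ht'def] at this
    exact absurd this (not_le.2 ht₁)
  have hgoodT : ∀ τ ∈ Icc (0:ℝ) T, X 1 τ - X 0 τ ≤ D ∧ X 1 τ - X 0 τ ≤ X 2 τ - X 1 τ := by
    rw [← ht'eq]; exact hgood'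
  obtain ⟨hant, hgb⟩ := master T ⟨hT.le, le_rfl⟩ hgoodT
  refine ⟨fun t ht => (hgoodT t ht).2, ?_⟩
  intro t ht t₂ ht₂ htle
  have h := hant ht ht₂ htle
  simp only at h
  have hEt : γ*E*t ≤ γ*E*t₂ := mul_le_mul_of_nonneg_left htle (mul_nonneg hγ.le hE.le)
  linarith
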